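/- Let β be a mixed base and m ≥ 1. Define the Sprague-Grundy function sg of the take-away game Γ(ℕ^m, C_β), where C_β is the set of nonzero C ∈ ℕ^m with ord_β(Σ_i c^i) = min_i ord_β(c^i), by the usual mex recursion: sg(X) = mex{sg(X - C) : C ∈ C_β, X - C ∈ ℕ^m}. Then sg(X) = σ_β(X) = x^0 ⊕ ... ⊕ x^{m-1} for all X ∈ ℕ^m. -/

import Mathlib

open scoped BigOperators

/-- β̂_L = β_0 ⋯ β_{L-1}, the place value of digit L in mixed base β. -/
def bhat (β : ℕ → ℕ) (L : ℕ) : ℕ := ∏ i ∈ Finset.range L, β i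

/-- The L-th digit of n in the mixed base β. -/
def mdigit (β : ℕ → ℕ) (n L : ℕ) : ℕ := n / bhat β L % β L

/-- Digit-wise addition modulo β_L in mixed base β. -/
def moplus (β : ℕ → ℕ) (n h : ℕ) : ℕ :=
  ∑ L ∈ Finset.range (n + h + 1), ((mdigit β n L + mdigit β h L) % β L) * bhat β L

/-- Digit-wise subtraction modulo β_L in mixed base β. -/
def mominus (β : ℕ → ℕ) (n h : ℕ) : ℕ :=
  ∑ L ∈ Finset.range (n + h + 1), ((β L + mdigit β n L - mdigit β h L) % β L) * bhat β L

/-- σ_β(X) = x^0 ⊕ ⋯ ⊕ x^{m-1}: the digit-wise Nim sum in mixed base β. -/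
def msigma (β : ℕ → ℕ) {m : ℕ} (X : Fin m → ℕ) : ℕ :=
  ∑ L ∈ Finset.range (∑ i, X i + 1), ((∑ i, mdigit β (X i) L) % β L) * bhat β L

/-- Hamming weight: number of nonzero components. -/
def hamwt {m : ℕ} (C : Fin m → ℕ) : ℕ := (Finset.univ.filter (fun i => C i ≠ 0)).card

/-- ord_β(n): the largest L with β̂_L ∣ n (⊤ for n = 0). -/
def mord (β : ℕ → ℕ) (n : ℕ) : ℕ∞ :=
  if n = 0 then ⊤ else (Nat.findGreatest (fun L => bhat β L ∣ n) n : ℕ∞)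

/-- 𝒞 is a Sprague-Grundy system of σ_β: its members are nonzero moves and
σ_β satisfies the mex recursion of the take-away game Γ(ℕ^m, 𝒞), i.e. σ_β is the
Sprague-Grundy function of that game. -/
def IsSGSystem (β : ℕ → ℕ) {m : ℕ} (𝒞 : Set (Fin m → ℕ)) : Prop :=
  (∀ C ∈ 𝒞, C ≠ 0) ∧
  ∀ X : Fin m → ℕ, msigma β X =
    sInf {n : ℕ | ∀ C ∈ 𝒞, (∀ i, C i ≤ X i) → msigma β (fun i => X i - C i) ≠ n}

section lemmas
variable {β : ℕ → ℕ} (hβ : ∀ L, 2 ≤ β L)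

lemma bhat_succ (L : ℕ) : bhat β (L + 1) = bhat β L * β L := Finset.prod_range_succ β L

include hβ

lemma bhat_pos (L : ℕ) : 0 < bhat β L :=
  Finset.prod_pos (fun i _ => lt_of_lt_of_le (by norm_num) (hβ i))

lemma two_pow_le_bhat (L : ℕ) : 2 ^ L ≤ bhat β L := by
  induction L with
  | zero => simp [bhat]
  | succ L ih =>
    rw [bhat_succ, pow_succ]
    exact Nat.mul_le_mul ih (hβ L)

lemma lt_bhat {n L : ℕ} (h : n < L) : n < bhat β L :=
  lt_of_lt_of_le (lt_of_lt_of_le (lt_of_lt_of_le h (Nat.le_of_lt (Nat.lt_two_pow_self (n := L))))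
    le_rfl) (two_pow_le_bhat hβ L)

lemma bhat_dvd {L M : ℕ} (h : L ≤ M) : bhat β L ∣ bhat β M := by
  unfold bhat
  exact Finset.prod_dvd_prod_of_subset _ _ _ (Finset.range_subset_range.2 h)

lemma bhat_lt_bhat {L M : ℕ} (h : L < M) : bhat β L < bhat β M := by
  have hd : bhat β (L+1) ∣ bhat β M := bhat_dvd hβ h
  calc bhat β L < bhat β L * β L := by
        have := hβ L; have := bhat_pos hβ L; nlinarith
    _ = bhat β (L+1) := (bhat_succ L).symm
    _ ≤ bhat β M := Nat.le_of_dvd (bhat_pos hβ M) hd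

lemma mdigit_lt (n L : ℕ) : mdigit β n L < β L :=
  Nat.mod_lt _ (lt_of_lt_of_le (by norm_num) (hβ L))

lemma mdigit_eq_zero {n L : ℕ} (h : n < bhat β L) : mdigit β n L = 0 := by
  unfold mdigit
  rw [Nat.div_eq_of_lt h]
  simp

lemma mdigit_eq_zero_of_lt {n L : ℕ} (h : n < L) : mdigit β n L = 0 :=
  mdigit_eq_zero hβ (lt_bhat hβ h)

lemma sum_mdigit_mod (n k : ℕ) :
    ∑ L ∈ Finset.range k, mdigit β n L * bhat β L = n % bhat β k := by
  induction k with
  | zero => simp [bhat, Nat.mod_one]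
  | succ k ih =>
    rw [Finset.sum_range_succ, ih, bhat_succ, Nat.mod_mul]
    unfold mdigit
    ring

lemma rep {n k : ℕ} (h : n < bhat β k) :
    ∑ L ∈ Finset.range k, mdigit β n L * bhat β L = n := by
  rw [sum_mdigit_mod hβ, Nat.mod_eq_of_lt h]

lemma digit_ext {a b : ℕ} (h : ∀ L, mdigit β a L = mdigit β b L) : a = b := by
  have ha : a < bhat β (a + b + 1) := lt_bhat hβ (by omega)
  have hb : b < bhat β (a + b + 1) := lt_bhat hβ (by omega)
  exact (rep hβ ha).symm.trans
    ((Finset.sum_congr rfl fun L _ => by rw [h L]).trans (rep hβ hb))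

lemma mdigit_add_mul {u L : ℕ} (n : ℕ) (h : bhat β (L + 1) ∣ u) :
    mdigit β (n + u) L = mdigit β n L := by
  obtain ⟨t, rfl⟩ := h
  rw [bhat_succ] at *
  unfold mdigit
  rw [mul_assoc, Nat.add_mul_div_left _ _ (bhat_pos hβ L), Nat.add_mul_mod_self_left]

lemma mdigit_sub_mul {u L n : ℕ} (h : bhat β (L + 1) ∣ u) (hu : u ≤ n) :
    mdigit β (n - u) L = mdigit β n L := by
  conv_rhs => rw [← Nat.sub_add_cancel hu]
  rw [mdigit_add_mul hβ _ h]

lemma val_lt {k : ℕ} {c : ℕ → ℕ} (hc : ∀ L < k, c L < β L) :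
    ∑ L ∈ Finset.range k, c L * bhat β L < bhat β k := by
  induction k with
  | zero => simp [bhat]
  | succ k ih =>
    rw [Finset.sum_range_succ, bhat_succ]
    have h1 : ∑ L ∈ Finset.range k, c L * bhat β L < bhat β k :=
      ih (fun L hL => hc L (by omega))
    have h2 : c k ≤ β k - 1 := by have := hc k (by omega); omega
    have h3 : c k * bhat β k ≤ (β k - 1) * bhat β k := Nat.mul_le_mul_right _ h2
    have h4 : (β k - 1) * bhat β k + bhat β k = β k * bhat β k := by
      have hb := hβ k
      have : β k - 1 + 1 = β k := by omega
      calc (β k - 1) * bhat β k + bhat β k = (β k - 1 + 1) * bhat β k := by ring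
        _ = β k * bhat β k := by rw [this]
    calc ∑ L ∈ Finset.range k, c L * bhat β L + c k * bhat β k
        < bhat β k + (β k - 1) * bhat β k := by omega
      _ = β k * bhat β k := by omega
      _ = bhat β k * β k := by ring

lemma mdigit_val {k : ℕ} {c : ℕ → ℕ} (hc : ∀ L < k, c L < β L) (M : ℕ) :
    mdigit β (∑ L ∈ Finset.range k, c L * bhat β L) M = if M < k then c M else 0 := by
  induction k with
  | zero => simp [mdigit]
  | succ k ih =>
    have hck : ∀ L < k, c L < β L := fun L hL => hc L (by omega)
    rw [Finset.sum_range_succ]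
    rcases lt_trichotomy M k with hM | rfl | hM
    · have hdvd : bhat β (M + 1) ∣ c k * bhat β k :=
        Dvd.dvd.mul_left (bhat_dvd hβ (by omega)) _
      rw [mdigit_add_mul hβ _ hdvd, ih hck, if_pos hM, if_pos (by omega)]
    · have hV : ∑ L ∈ Finset.range M, c L * bhat β L < bhat β M := val_lt hβ hck
      unfold mdigit
      rw [Nat.add_mul_div_right _ _ (bhat_pos hβ M), Nat.div_eq_of_lt hV, zero_add,
        Nat.mod_eq_of_lt (hc M (by omega)), if_pos (by omega)]
    · have hV : ∑ L ∈ Finset.range k, c L * bhat β L + c k * bhat β k < bhat β (k+1) := by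
        have := val_lt hβ hc
        rwa [Finset.sum_range_succ] at this
      rw [mdigit_eq_zero hβ (lt_of_lt_of_le hV (Nat.le_of_dvd (bhat_pos hβ M) (bhat_dvd hβ (by omega)))), if_neg (by omega)]

lemma mdigit_msigma {m : ℕ} (X : Fin m → ℕ) (L : ℕ) :
    mdigit β (msigma β X) L = (∑ i, mdigit β (X i) L) % β L := by
  unfold msigma
  rw [mdigit_val hβ (fun M _ => Nat.mod_lt _ (lt_of_lt_of_le (by norm_num) (hβ M))) L]
  split_ifs with h
  · rfl
  · symm
    have : ∀ i : Fin m, mdigit β (X i) L = 0 := by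
      intro i
      apply mdigit_eq_zero_of_lt hβ
      have : X i ≤ ∑ j, X j := Finset.single_le_sum (fun j _ => Nat.zero_le _) (Finset.mem_univ i)
      omega
    simp [this]

end lemmas

section lemmas2
variable {β : ℕ → ℕ} (hβ : ∀ L, 2 ≤ β L)
include hβ

lemma le_mord {L n : ℕ} (h : bhat β L ∣ n) : (L : ℕ∞) ≤ mord β n := by
  unfold mord
  split_ifs with h0
  · exact le_top
  · have hble : bhat β L ≤ n := Nat.le_of_dvd (Nat.pos_of_ne_zero h0) h
    have hLn : L ≤ n := le_trans (le_trans (Nat.le_of_lt (Nat.lt_two_pow_self (n := L))) (two_pow_le_bhat hβ L)) hble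
    exact_mod_cast Nat.le_findGreatest (P := fun L => bhat β L ∣ n) hLn h

lemma mord_eq_iff {n : ℕ} (hn : n ≠ 0) (d : ℕ) :
    mord β n = (d : ℕ∞) ↔ bhat β d ∣ n ∧ ¬ bhat β (d + 1) ∣ n := by
  unfold mord
  rw [if_neg hn]
  constructor
  · intro h
    have hd : Nat.findGreatest (fun L => bhat β L ∣ n) n = d := by exact_mod_cast h
    constructor
    · have h0 : bhat β 0 ∣ n := by simp [bhat]
      have := Nat.findGreatest_spec (P := fun L => bhat β L ∣ n) (Nat.zero_le n) h0
      rwa [hd] at this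
    · intro hdvd
      have hble : bhat β (d+1) ≤ n := Nat.le_of_dvd (Nat.pos_of_ne_zero hn) hdvd
      have hle : d + 1 ≤ n :=
        le_trans (le_trans (Nat.le_of_lt (Nat.lt_two_pow_self (n := d+1))) (two_pow_le_bhat hβ (d+1))) hble
      have := Nat.le_findGreatest (P := fun L => bhat β L ∣ n) hle hdvd
      omega
  · rintro ⟨h1, h2⟩
    have hd : Nat.findGreatest (fun L => bhat β L ∣ n) n = d := by
      apply le_antisymm
      · by_contra hc
        push_neg at hc
        have hP := Nat.findGreatest_spec (P := fun L => bhat β L ∣ n) (m := 0) (Nat.zero_le n) (by simp [bhat])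
        exact h2 (dvd_trans (bhat_dvd hβ hc) hP)
      · have hble : bhat β d ≤ n := Nat.le_of_dvd (Nat.pos_of_ne_zero hn) h1
        have hle : d ≤ n :=
          le_trans (le_trans (Nat.le_of_lt (Nat.lt_two_pow_self (n := d))) (two_pow_le_bhat hβ d)) hble
        exact Nat.le_findGreatest (P := fun L => bhat β L ∣ n) hle h1
    exact_mod_cast hd

lemma mord_exists {n : ℕ} (hn : n ≠ 0) :
    ∃ d : ℕ, mord β n = (d : ℕ∞) ∧ bhat β d ∣ n ∧ ¬ bhat β (d + 1) ∣ n := by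
  refine ⟨Nat.findGreatest (fun L => bhat β L ∣ n) n, by unfold mord; rw [if_neg hn], ?_⟩
  rw [← mord_eq_iff hβ hn]
  unfold mord; rw [if_neg hn]

omit hβ in
lemma sub_mul_div' {x s b : ℕ} (hb : 0 < b) (h : s * b ≤ x) : (x - s * b) / b = x / b - s := by
  have hq : s ≤ x / b := (Nat.le_div_iff_mul_le hb).2 h
  have h2 : x - s * b = x % b + b * (x / b - s) := by
    have hdm := Nat.div_add_mod x b
    have h4 : b * (x / b - s) = b * (x / b) - b * s := Nat.mul_sub b _ _
    have h5 : b * s ≤ b * (x / b) := Nat.mul_le_mul_left b hq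
    have h6 : b * s = s * b := Nat.mul_comm b s
    omega
  rw [h2, Nat.add_mul_div_left _ _ hb, Nat.div_eq_of_lt (Nat.mod_lt _ hb), zero_add]

/-- Lemma (a): every legal move changes σ. -/
lemma lemA {m : ℕ} (X C : Fin m → ℕ) (hC0 : C ≠ 0)
    (hord : mord β (∑ i, C i) = ⨅ i, mord β (C i))
    (hle : ∀ i, C i ≤ X i) : msigma β (fun i => X i - C i) ≠ msigma β X := by
  have hCi : ∃ i, C i ≠ 0 := by
    by_contra hc
    push_neg at hc
    exact hC0 (funext hc)
  obtain ⟨j, hj⟩ := hCi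
  have hSC : (∑ i, C i) ≠ 0 := by
    have : C j ≤ ∑ i, C i := Finset.single_le_sum (fun i _ => Nat.zero_le _) (Finset.mem_univ j)
    omega
  obtain ⟨d, hd, hdvd, hndvd⟩ := mord_exists hβ hSC
  -- every component is divisible by bhat d
  have hcomp : ∀ i, bhat β d ∣ C i := by
    intro i
    rcases eq_or_ne (C i) 0 with h0 | h0
    · simp [h0]
    · have h1 : (d : ℕ∞) ≤ mord β (C i) := by
        rw [hord] at hd
        calc (d : ℕ∞) = ⨅ i, mord β (C i) := hd.symm
          _ ≤ mord β (C i) := iInf_le _ i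
      obtain ⟨e, he, hedvd, _⟩ := mord_exists hβ h0
      rw [he] at h1
      have hde : d ≤ e := by exact_mod_cast h1
      exact dvd_trans (bhat_dvd hβ hde) hedvd
  intro heq
  -- look at digit d
  have hdig := congrArg (fun t => mdigit β t d) heq
  simp only [mdigit_msigma hβ] at hdig
  -- compute digits of X i - C i at d
  set b := bhat β d with hb
  have hbpos : 0 < b := bhat_pos hβ d
  have hqd : ∀ i, mdigit β (X i - C i) d = (X i / b - C i / b) % β d := by
    intro i
    have hCi : C i = C i / b * b := (Nat.div_mul_cancel (hcomp i)).symm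
    unfold mdigit
    congr 1
    rw [← hb]
    conv_lhs => rw [hCi]
    have hle2 : C i / b * b ≤ X i := by rw [← hCi]; exact hle i
    rw [sub_mul_div' hbpos hle2]
  have hq2 : ∀ i, mdigit β (X i) d = (X i / b) % β d := fun i => rfl
  rw [Finset.sum_congr rfl (fun i _ => hqd i), Finset.sum_congr rfl (fun i _ => hq2 i)] at hdig
  -- reduce modulo β d
  have hA : (∑ i, (X i / b - C i / b)) % β d = (∑ i, X i / b) % β d := by
    calc (∑ i, (X i / b - C i / b)) % β d
        = (∑ i, (X i / b - C i / b) % β d) % β d := Finset.sum_nat_mod _ _ _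
      _ = (∑ i, (X i / b) % β d) % β d := hdig
      _ = (∑ i, X i / b) % β d := (Finset.sum_nat_mod _ _ _).symm
  have hptle : ∀ i ∈ Finset.univ, C i / b ≤ X i / b :=
    fun i _ => Nat.div_le_div_right (hle i)
  rw [Finset.sum_tsub_distrib Finset.univ hptle] at hA
  set A := ∑ i, X i / b
  set B := ∑ i, C i / b
  have hBA : B ≤ A := Finset.sum_le_sum hptle
  -- from hA and hBA : β d ∣ B
  have h5 : β d ∣ A - (A - B) := (Nat.modEq_iff_dvd' (Nat.sub_le A B)).1 hA
  have h6 : A - (A - B) = B := by omega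
  rw [h6] at h5
  -- then bhat (d+1) ∣ ∑ C i, contradiction
  obtain ⟨t, ht⟩ := h5
  have hsum : ∑ i, C i = B * b := by
    rw [Finset.sum_congr rfl (fun i _ => (Nat.div_mul_cancel (hcomp i)).symm), ← Finset.sum_mul]
  apply hndvd
  rw [hsum, ht, bhat_succ, ← hb]
  exact ⟨t, by ring⟩

end lemmas2

section lemmas3
variable {β : ℕ → ℕ} (hβ : ∀ L, 2 ≤ β L)

omit hβ in
lemma add_inv_mod (a b mm : ℕ) (hm : 0 < mm) :
    (a + (b + (mm - 1) * a) % mm) % mm = b % mm := by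
  rw [Nat.add_mod_mod]
  have h1 : a + (b + (mm - 1) * a) = b + mm * a := by
    have h2 : mm * a = (mm - 1) * a + a := by
      have h3 : mm = (mm - 1) + 1 := by omega
      calc mm * a = ((mm - 1) + 1) * a := by rw [← h3]
        _ = (mm - 1) * a + a := by ring
    omega
  rw [h1, Nat.add_mul_mod_self_left]

omit hβ in
lemma exists_sub {m : ℕ} (f : Fin m → ℕ) (K : ℕ) (h : K ≤ ∑ i, f i) :
    ∃ g : Fin m → ℕ, (∀ i, g i ≤ f i) ∧ ∑ i, g i = ∑ i, f i - K := by
  induction K with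
  | zero => exact ⟨f, fun i => le_rfl, by omega⟩
  | succ K ih =>
    obtain ⟨g, hg, hsum⟩ := ih (by omega)
    have hpos : 0 < ∑ i, g i := by omega
    have hj : ∃ j, g j ≠ 0 := by
      by_contra hc
      push_neg at hc
      simp [hc] at hpos
    obtain ⟨j, hj⟩ := hj
    refine ⟨Function.update g j (g j - 1), fun i => ?_, ?_⟩
    · rcases eq_or_ne i j with rfl | hij
      · rw [Function.update_self]; exact le_trans (Nat.sub_le _ _) (hg i)
      · rw [Function.update_of_ne hij]; exact hg i
    · rw [Finset.sum_update_of_mem (Finset.mem_univ j), Finset.sdiff_singleton_eq_erase]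
      have h2 : g j + ∑ i ∈ Finset.univ.erase j, g i = ∑ i, g i :=
        Finset.add_sum_erase _ _ (Finset.mem_univ j)
      omega

include hβ

/-- Digit of a sum `a + r` where `a` is a multiple of `bhat M` and `r < bhat M`:
for `L ≥ M` the digit is that of `a`. -/
lemma mdigit_add_lt {a r M L : ℕ} (hM : bhat β M ∣ a) (hr : r < bhat β M) (hL : M ≤ L) :
    mdigit β (a + r) L = mdigit β a L := by
  have hMB : bhat β M ∣ bhat β L := bhat_dvd hβ hL
  have h1 : bhat β M ∣ a % bhat β L := (Nat.dvd_mod_iff hMB).2 hM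
  have hpos : 0 < bhat β L := bhat_pos hβ L
  have hposM : 0 < bhat β M := bhat_pos hβ M
  have h2 : a % bhat β L + r < bhat β L := by
    obtain ⟨w, hw⟩ := h1
    obtain ⟨v, hv⟩ := hMB
    have hmod : a % bhat β L < bhat β L := Nat.mod_lt _ hpos
    rw [hw, hv] at hmod ⊢
    have hwv : w < v := lt_of_mul_lt_mul_left hmod (Nat.zero_le _)
    have : bhat β M * (w + 1) ≤ bhat β M * v := Nat.mul_le_mul_left _ (by omega)
    have hws : bhat β M * (w + 1) = bhat β M * w + bhat β M := by ring
    omega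
  have h3 : (a + r) / bhat β L = a / bhat β L := by
    conv_lhs => rw [show a + r = a % bhat β L + r + bhat β L * (a / bhat β L) by
      have := Nat.div_add_mod a (bhat β L); omega]
    rw [Nat.add_mul_div_left _ _ hpos, Nat.div_eq_of_lt h2, zero_add]
  unfold mdigit
  rw [h3]

/-- Digits after decreasing the column-`d` digit of `x` from `mdigit x d` to `c`. -/
lemma mdigit_colsub {x c d : ℕ} (hc : c ≤ mdigit β x d) (L : ℕ) :
    mdigit β (x - (mdigit β x d - c) * bhat β d) L
      = if L = d then c else mdigit β x L := by
  set b := bhat β d with hb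
  have hbpos : 0 < b := bhat_pos hβ d
  set t := mdigit β x d - c with ht
  have htf : t ≤ mdigit β x d := Nat.sub_le _ _
  have hfd : mdigit β x d ≤ x / b := Nat.mod_le _ _
  have hle2 : t * b ≤ x := by
    calc t * b ≤ (x / b) * b := Nat.mul_le_mul_right _ (le_trans htf hfd)
      _ ≤ x := Nat.div_mul_le_self _ _
  rcases lt_trichotomy L d with hLd | rfl | hLd
  · rw [if_neg (by omega)]
    exact mdigit_sub_mul hβ (Dvd.dvd.mul_left (bhat_dvd hβ (by omega)) t) hle2
  · rw [if_pos rfl]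
    unfold mdigit
    rw [← hb, sub_mul_div' hbpos hle2]
    have hq : x / b - t = β L * ((x / b) / β L) + c := by
      have := Nat.div_add_mod (x / b) (β L)
      have hxd : mdigit β x L = x / b % β L := rfl
      omega
    rw [hq, Nat.mul_add_mod, Nat.mod_eq_of_lt (lt_of_le_of_lt hc (mdigit_lt hβ x L))]
  · rw [if_neg (by omega)]
    set Q := x / bhat β (d + 1) with hQ
    set R := x % bhat β (d + 1) with hR
    have hRlt : R < bhat β (d + 1) := Nat.mod_lt _ (bhat_pos hβ _)
    have hx : x = bhat β (d + 1) * Q + R := (Nat.div_add_mod _ _).symm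
    have hRsplit : R = x % b + b * mdigit β x d := by rw [hR, bhat_succ, ← hb, Nat.mod_mul]; rfl
    have htR : t * b ≤ R := by
      have : t * b ≤ b * mdigit β x d := by
        rw [mul_comm]; exact Nat.mul_le_mul_left _ htf
      omega
    have hdvd : bhat β (d + 1) ∣ bhat β (d + 1) * Q := Dvd.intro Q rfl
    have h1 : x - t * b = bhat β (d + 1) * Q + (R - t * b) := by omega
    rw [h1, mdigit_add_lt hβ hdvd (by omega) (by omega : d + 1 ≤ L)]
    conv_rhs => rw [hx]
    rw [mdigit_add_lt hβ hdvd hRlt (by omega : d + 1 ≤ L)]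

/-- Digits of `Z + g·bhat d + bhat (d+1)·Q` where `Z` is a valid digit expansion below `d`. -/
lemma mdigit_special {d : ℕ} {z : ℕ → ℕ} (hz : ∀ L, z L < β L) {g : ℕ} (hg : g < β d)
    (Q L : ℕ) :
    mdigit β ((∑ L ∈ Finset.range d, z L * bhat β L) + g * bhat β d + bhat β (d + 1) * Q) L
      = if L < d then z L else if L = d then g
        else mdigit β (bhat β (d + 1) * Q) L := by
  set Z := ∑ L ∈ Finset.range d, z L * bhat β L with hZ
  set c : ℕ → ℕ := fun L => if L = d then g else z L with hc
  have hcd : ∀ L < d + 1, c L < β L := by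
    intro L hL
    rcases eq_or_ne L d with rfl | hLd
    · simp [hc, hg]
    · simp only [hc, if_neg hLd]; exact hz L
  have hZc : Z + g * bhat β d = ∑ L ∈ Finset.range (d + 1), c L * bhat β L := by
    rw [Finset.sum_range_succ]
    simp only [hc, if_pos rfl]
    congr 1
    exact Finset.sum_congr rfl (fun L hL => by
      rw [if_neg (Finset.mem_range.1 hL).ne])
  have hZd1 : Z + g * bhat β d < bhat β (d + 1) := by rw [hZc]; exact val_lt hβ hcd
  rcases le_or_gt L d with hLd | hLd
  · have hdvd : bhat β (L + 1) ∣ bhat β (d + 1) * Q :=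
      Dvd.dvd.mul_right (bhat_dvd hβ (by omega)) Q
    rw [mdigit_add_mul hβ _ hdvd, hZc, mdigit_val hβ hcd L, if_pos (by omega)]
    rcases eq_or_ne L d with rfl | hne
    · simp [hc]
    · have hLlt : L < d := by omega
      simp only [hc, if_neg hne, if_pos hLlt]
  · have hdvd : bhat β (d + 1) ∣ bhat β (d + 1) * Q := Dvd.intro Q rfl
    rw [add_comm (Z + g * bhat β d) (bhat β (d + 1) * Q)] at *
    rw [show bhat β (d+1) * Q + (Z + g * bhat β d) = bhat β (d+1) * Q + (Z + g * bhat β d) from rfl,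
      mdigit_add_lt hβ hdvd hZd1 (by omega : d + 1 ≤ L), if_neg (by omega), if_neg (by omega)]

/-- The top differing digit of `n < s`. -/
lemma exists_top_digit {n s : ℕ} (h : n < s) :
    ∃ d, mdigit β n d < mdigit β s d ∧ ∀ L, d < L → mdigit β n L = mdigit β s L := by
  classical
  set P : ℕ → Prop := fun L => mdigit β n L ≠ mdigit β s L with hP
  have hex : ∃ L, P L := by
    by_contra hc
    push_neg at hc
    simp only [P, not_not] at hc
    exact absurd (digit_ext hβ hc) (by omega)
  obtain ⟨L₀, hL₀⟩ := hex
  have hL₀le : L₀ ≤ n + s := by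
    by_contra hc
    push_neg at hc
    have h1 : mdigit β n L₀ = 0 := mdigit_eq_zero_of_lt hβ (by omega)
    have h2 : mdigit β s L₀ = 0 := mdigit_eq_zero_of_lt hβ (by omega)
    exact hL₀ (h1.trans h2.symm)
  set d := Nat.findGreatest P (n + s) with hd
  have hPd : P d := Nat.findGreatest_spec (P := P) hL₀le hL₀
  have htop : ∀ L, d < L → mdigit β n L = mdigit β s L := by
    intro L hL
    rcases le_or_gt L (n + s) with hLb | hLb
    · by_contra hc
      exact Nat.findGreatest_is_greatest (P := P) hL hLb hc
    · rw [mdigit_eq_zero_of_lt hβ (by omega), mdigit_eq_zero_of_lt hβ (by omega)]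
  refine ⟨d, ?_, htop⟩
  -- compare heads
  set k := n + s + 1 with hk
  have hdk : d + 1 ≤ k := by
    have := Nat.findGreatest_le (P := P) (n + s)
    omega
  have hrepn : ∑ L ∈ Finset.range k, mdigit β n L * bhat β L = n := rep hβ (lt_bhat hβ (by omega))
  have hreps : ∑ L ∈ Finset.range k, mdigit β s L * bhat β L = s := rep hβ (lt_bhat hβ (by omega))
  have hsplit : ∀ a : ℕ, a < bhat β k →
      a = a % bhat β (d+1) + ∑ L ∈ Finset.Ico (d+1) k, mdigit β a L * bhat β L := by
    intro a ha
    calc a = ∑ L ∈ Finset.range k, mdigit β a L * bhat β L := (rep hβ ha).symm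
      _ = ∑ L ∈ Finset.Ico 0 k, mdigit β a L * bhat β L := by rw [Finset.range_eq_Ico]
      _ = ∑ L ∈ Finset.Ico 0 (d+1), mdigit β a L * bhat β L
          + ∑ L ∈ Finset.Ico (d+1) k, mdigit β a L * bhat β L :=
        (Finset.sum_Ico_consecutive _ (Nat.zero_le (d+1)) hdk).symm
      _ = a % bhat β (d+1) + ∑ L ∈ Finset.Ico (d+1) k, mdigit β a L * bhat β L := by
        rw [← Finset.range_eq_Ico, sum_mdigit_mod hβ]
  have hsplitn := hsplit n (lt_bhat hβ (by omega))
  have hsplits := hsplit s (lt_bhat hβ (by omega))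
  have htails : ∑ L ∈ Finset.Ico (d+1) k, mdigit β n L * bhat β L
      = ∑ L ∈ Finset.Ico (d+1) k, mdigit β s L * bhat β L :=
    Finset.sum_congr rfl (fun L hL => by
      rw [htop L (by have := (Finset.mem_Ico.1 hL).1; omega)])
  have hab : n % bhat β (d+1) < s % bhat β (d+1) := by omega
  have han : n % bhat β (d+1) = n % bhat β d + bhat β d * mdigit β n d := by
    rw [bhat_succ, Nat.mod_mul]; rfl
  have has : s % bhat β (d+1) = s % bhat β d + bhat β d * mdigit β s d := by
    rw [bhat_succ, Nat.mod_mul]; rfl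
  have hrn : n % bhat β d < bhat β d := Nat.mod_lt _ (bhat_pos hβ d)
  have hrs : s % bhat β d < bhat β d := Nat.mod_lt _ (bhat_pos hβ d)
  have hle : mdigit β n d ≤ mdigit β s d := by
    by_contra hc
    push_neg at hc
    have h1 : bhat β d * (mdigit β s d + 1) ≤ bhat β d * mdigit β n d :=
      Nat.mul_le_mul_left _ (by omega)
    have h2 : bhat β d * (mdigit β s d + 1) = bhat β d * mdigit β s d + bhat β d := by ring
    omega
  have hne : mdigit β n d ≠ mdigit β s d := hPd
  omega

end lemmas3

section lemmas4
variable {β : ℕ → ℕ} (hβ : ∀ L, 2 ≤ β L)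
include hβ

lemma lemB {m : ℕ} (X : Fin m → ℕ) (n : ℕ) (h : n < msigma β X) :
    ∃ C : Fin m → ℕ, C ≠ 0 ∧ mord β (∑ i, C i) = (⨅ i, mord β (C i)) ∧
      (∀ i, C i ≤ X i) ∧ msigma β (fun i => X i - C i) = n := by
  classical
  set s := msigma β X with hs
  obtain ⟨d, hnd_lt, htop⟩ := exists_top_digit hβ h
  set b := bhat β d with hb
  have hbpos : 0 < b := bhat_pos hβ d
  have hβd := hβ d
  set f : Fin m → ℕ := fun i => mdigit β (X i) d with hf
  have hsd : mdigit β s d = (∑ i, f i) % β d := mdigit_msigma hβ X d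
  set K := mdigit β s d - mdigit β n d with hK
  have hK1 : 1 ≤ K := by omega
  have hKβ : K < β d := by
    have := mdigit_lt hβ s d
    omega
  have hKle : K ≤ ∑ i, f i := by
    have h1 : mdigit β s d ≤ ∑ i, f i := hsd ▸ Nat.mod_le _ _
    omega
  obtain ⟨g, hgle, hgsum⟩ := exists_sub f K hKle
  have hi0 : ∃ i₀, g i₀ < f i₀ := by
    by_contra hc
    push_neg at hc
    have := Finset.sum_le_sum (fun i (_ : i ∈ Finset.univ) => hc i)
    omega
  obtain ⟨i₀, hgi0⟩ := hi0
  -- lower digit targets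
  set A : ℕ → ℕ := fun L => ∑ i, mdigit β (X i) L - mdigit β (X i₀) L with hA
  set z : ℕ → ℕ := fun L => (mdigit β n L + (β L - 1) * A L) % β L with hz
  have hzlt : ∀ L, z L < β L := fun L => Nat.mod_lt _ (by have := hβ L; omega)
  set Z := ∑ L ∈ Finset.range d, z L * bhat β L with hZ
  have hZlt : Z < b := val_lt hβ (fun L _ => hzlt L)
  set Q := X i₀ / bhat β (d+1) with hQ
  set Y0 := Z + g i₀ * b + bhat β (d+1) * Q with hY0
  set C : Fin m → ℕ := fun i => if i = i₀ then X i₀ - Y0 else (f i - g i) * b with hC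
  -- decomposition of X i₀
  have hBd1 : bhat β (d+1) = b * β d := by rw [bhat_succ, hb]
  have hR : X i₀ % bhat β (d+1) = X i₀ % b + f i₀ * b := by
    rw [hBd1, Nat.mod_mul]
    congr 1
    rw [mul_comm]
    rfl
  have hXi0 : X i₀ = bhat β (d+1) * Q + (X i₀ % b + f i₀ * b) := by
    rw [← hR, hQ]
    exact (Nat.div_add_mod _ _).symm
  have hr0 : X i₀ % b < b := Nat.mod_lt _ hbpos
  have hfgb : g i₀ * b + b ≤ f i₀ * b := by
    have h1 : (g i₀ + 1) * b ≤ f i₀ * b := Nat.mul_le_mul_right _ (by omega)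
    have h2 : (g i₀ + 1) * b = g i₀ * b + b := by ring
    omega
  have hfblt : f i₀ * b + b ≤ bhat β (d+1) := by
    have hfd : f i₀ < β d := mdigit_lt hβ _ d
    have h1 : (f i₀ + 1) * b ≤ β d * b := Nat.mul_le_mul_right _ (by omega)
    have h2 : (f i₀ + 1) * b = f i₀ * b + b := by ring
    have h3 : bhat β (d+1) = β d * b := by rw [hBd1]; ring
    omega
  have hY0lt : Y0 < X i₀ := by rw [hY0]; omega
  set W := X i₀ - Y0 with hW
  have hWeq : W + Z + g i₀ * b = X i₀ % b + f i₀ * b := by rw [hW, hY0]; omega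
  have hWpos : 0 < W := by omega
  have hWlt : W < bhat β (d+1) := by omega
  -- sum of the move
  set t := ∑ i ∈ Finset.univ.erase i₀, (f i - g i) with htdef
  have hCi0 : C i₀ = W := by rw [hC]; simp [hW]
  have hCne : ∀ i, i ≠ i₀ → C i = (f i - g i) * b := fun i hi => by rw [hC]; simp [hi]
  have hSC : ∑ i, C i = W + t * b := by
    rw [← Finset.add_sum_erase _ C (Finset.mem_univ i₀), hCi0]
    congr 1
    rw [htdef, Finset.sum_mul]
    exact Finset.sum_congr rfl (fun i hi => hCne i (Finset.ne_of_mem_erase hi))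
  have hKsum : ∑ i, (f i - g i) = K := by
    rw [Finset.sum_tsub_distrib _ (fun i _ => hgle i)]
    omega
  have hKt : t + (f i₀ - g i₀) = K := by
    rw [← hKsum, ← Finset.add_sum_erase _ (fun i => f i - g i) (Finset.mem_univ i₀), htdef]
    omega
  have hfg0 : 1 ≤ f i₀ - g i₀ := by omega
  have htb : t * b + (f i₀ - g i₀) * b = K * b := by rw [← add_mul, hKt]
  have hfgb2 : (f i₀ - g i₀) * b + g i₀ * b = f i₀ * b := by
    rw [tsub_mul]
    have : g i₀ * b ≤ f i₀ * b := Nat.mul_le_mul_right _ (le_of_lt hgi0)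
    omega
  have hKb : (K + 1) * b ≤ β d * b := Nat.mul_le_mul_right _ (by omega)
  have hKb2 : (K + 1) * b = K * b + b := by ring
  have hβdb : β d * b = bhat β (d+1) := by rw [hBd1]; ring
  have hSClt : ∑ i, C i < bhat β (d+1) := by rw [hSC]; omega
  have hSCpos : 0 < ∑ i, C i := by rw [hSC]; omega
  -- divisibility transfer
  have hdvdW : ∀ L, bhat β L ∣ W ↔ bhat β L ∣ ∑ i, C i := by
    intro L
    rcases le_or_gt L d with hLd | hLd
    · rw [hSC, add_comm W (t * b)]
      exact (Nat.dvd_add_right (Dvd.dvd.mul_left ((bhat_dvd hβ hLd).trans (dvd_refl b)) t)).symm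
    · have hd1L : bhat β (d+1) ∣ bhat β L := bhat_dvd hβ (by omega)
      constructor
      · intro hc
        exfalso
        have h1 : bhat β (d+1) ∣ W := hd1L.trans hc
        have := Nat.le_of_dvd hWpos h1
        omega
      · intro hc
        exfalso
        have h1 : bhat β (d+1) ∣ ∑ i, C i := hd1L.trans hc
        have : bhat β (d+1) ≤ ∑ i, C i := Nat.le_of_dvd hSCpos h1
        omega
  -- mord computation
  have hW0 : W ≠ 0 := by omega
  have hSC0 : ∑ i, C i ≠ 0 := by omega
  obtain ⟨e, he, hedvd, hendvd⟩ := mord_exists hβ hW0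
  have hmordSC : mord β (∑ i, C i) = (e : ℕ∞) := by
    rw [mord_eq_iff hβ hSC0]
    exact ⟨(hdvdW e).1 hedvd, fun hcon => hendvd ((hdvdW (e+1)).2 hcon)⟩
  have hed : e ≤ d := by
    by_contra hc
    push_neg at hc
    have h1 : bhat β (d+1) ∣ W := (bhat_dvd hβ (by omega)).trans hedvd
    have := Nat.le_of_dvd hWpos h1
    omega
  have hmin : (⨅ i, mord β (C i)) = (e : ℕ∞) := by
    apply le_antisymm
    · calc (⨅ i, mord β (C i)) ≤ mord β (C i₀) := iInf_le _ i₀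
        _ = (e : ℕ∞) := by rw [hCi0, he]
    · apply le_iInf
      intro i
      rcases eq_or_ne i i₀ with rfl | hi
      · rw [hCi0, he]
      · rw [hCne i hi]
        exact le_mord hβ (Dvd.dvd.mul_left (bhat_dvd hβ hed) _)
  have hordC : mord β (∑ i, C i) = ⨅ i, mord β (C i) := by rw [hmordSC, hmin]
  -- digits of the resulting position
  have hYi0 : X i₀ - C i₀ = Y0 := by rw [hCi0, hW]; omega
  have hgfd : ∀ i, g i < β d := fun i => lt_of_le_of_lt (hgle i) (mdigit_lt hβ _ d)
  have hdigY0 : ∀ L, mdigit β Y0 L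
      = if L < d then z L else if L = d then g i₀ else mdigit β (X i₀) L := by
    intro L
    rw [hY0, hZ, mdigit_special hβ hzlt (hgfd i₀) Q L]
    split_ifs with h1 h2
    · rfl
    · rfl
    · conv_rhs => rw [hXi0]
      rw [mdigit_add_lt hβ (Dvd.intro Q rfl) (by omega) (by omega : d + 1 ≤ L)]
  have hdigYne : ∀ i, i ≠ i₀ → ∀ L, mdigit β (X i - C i) L
      = if L = d then g i else mdigit β (X i) L := by
    intro i hi L
    rw [hCne i hi]
    exact mdigit_colsub hβ (hgle i) L
  -- column sums
  have hAL : ∀ L, ∑ i ∈ Finset.univ.erase i₀, mdigit β (X i) L = A L := by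
    intro L
    have h1 : mdigit β (X i₀) L + ∑ i ∈ Finset.univ.erase i₀, mdigit β (X i) L
        = ∑ i, mdigit β (X i) L :=
      Finset.add_sum_erase _ (fun i => mdigit β (X i) L) (Finset.mem_univ i₀)
    have h2 : mdigit β (X i₀) L ≤ ∑ i, mdigit β (X i) L :=
      Finset.single_le_sum (f := fun i => mdigit β (X i) L)
        (fun i _ => Nat.zero_le _) (Finset.mem_univ i₀)
    simp only [hA]
    omega
  have hcols : ∀ L, (∑ i, mdigit β (X i - C i) L) % β L = mdigit β n L := by
    intro L
    rw [← Finset.add_sum_erase _ (fun i => mdigit β (X i - C i) L) (Finset.mem_univ i₀)]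
    rcases lt_trichotomy L d with hLd | rfl | hLd
    · have h1 : mdigit β (X i₀ - C i₀) L = z L := by
        rw [hYi0, hdigY0 L, if_pos hLd]
      have h2 : ∑ i ∈ Finset.univ.erase i₀, mdigit β (X i - C i) L = A L := by
        rw [Finset.sum_congr rfl (fun i hi => by
          rw [hdigYne i (Finset.ne_of_mem_erase hi) L, if_neg (by omega)])]
        exact hAL L
      rw [h1, h2, add_comm (z L) (A L)]
      simp only [hz]
      exact (add_inv_mod (A L) (mdigit β n L) (β L) (by have := hβ L; omega)).trans
        (Nat.mod_eq_of_lt (mdigit_lt hβ n L))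
    · have h1 : mdigit β (X i₀ - C i₀) L = g i₀ := by
        rw [hYi0, hdigY0 L, if_neg (by omega), if_pos rfl]
      have h2 : ∑ i ∈ Finset.univ.erase i₀, mdigit β (X i - C i) L
          = ∑ i ∈ Finset.univ.erase i₀, g i := by
        refine Finset.sum_congr rfl (fun i hi => by
          rw [hdigYne i (Finset.ne_of_mem_erase hi) L, if_pos rfl])
      have h3 : g i₀ + ∑ i ∈ Finset.univ.erase i₀, g i = ∑ i, g i :=
        Finset.add_sum_erase _ _ (Finset.mem_univ i₀)
      rw [h1, h2, h3, hgsum]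
      have e1 : ∑ i, f i = β L * ((∑ i, f i) / β L) + mdigit β s L := by
        rw [hsd]
        exact (Nat.div_add_mod _ _).symm
      have h4 : ∑ i, f i - K = β L * ((∑ i, f i) / β L) + mdigit β n L := by omega
      rw [h4, Nat.mul_add_mod, Nat.mod_eq_of_lt (mdigit_lt hβ n L)]
    · have h1 : mdigit β (X i₀ - C i₀) L = mdigit β (X i₀) L := by
        rw [hYi0, hdigY0 L, if_neg (by omega), if_neg (by omega)]
      have h2 : ∑ i ∈ Finset.univ.erase i₀, mdigit β (X i - C i) L
          = ∑ i ∈ Finset.univ.erase i₀, mdigit β (X i) L := by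
        refine Finset.sum_congr rfl (fun i hi => by
          rw [hdigYne i (Finset.ne_of_mem_erase hi) L, if_neg (by omega)])
      rw [h1, h2, Finset.add_sum_erase _ (fun i => mdigit β (X i) L) (Finset.mem_univ i₀),
        ← mdigit_msigma hβ X L, ← hs, ← htop L hLd]
  -- conclusion
  have hsig : msigma β (fun i => X i - C i) = n := by
    apply digit_ext hβ
    intro L
    rw [mdigit_msigma hβ]
    exact hcols L
  have hCle : ∀ i, C i ≤ X i := by
    intro i
    rcases eq_or_ne i i₀ with rfl | hi
    · rw [hCi0, hW]; omega
    · rw [hCne i hi]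
      calc (f i - g i) * b ≤ f i * b := Nat.mul_le_mul_right _ (Nat.sub_le _ _)
        _ ≤ (X i / b) * b := Nat.mul_le_mul_right _ (Nat.mod_le _ _)
        _ ≤ X i := Nat.div_mul_le_self _ _
  have hC0 : C ≠ 0 := by
    intro hc
    have h0 : C i₀ = 0 := by rw [hc]; rfl
    rw [hCi0] at h0
    omega
  exact ⟨C, hC0, hordC, hCle, hsig⟩
end lemmas4


/-- The Sprague-Grundy function of the take-away game Γ(ℕ^m, 𝒞_β) is σ_β. -/
theorem stmt4 (β : ℕ → ℕ) (hβ : ∀ L, 2 ≤ β L) {m : ℕ} (hm : 1 ≤ m)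
    (sg : (Fin m → ℕ) → ℕ)
    (hsg : ∀ X : Fin m → ℕ, sg X =
      sInf {n : ℕ | ∀ C : Fin m → ℕ, C ≠ 0 →
        mord β (∑ i, C i) = (⨅ i, mord β (C i)) →
        (∀ i, C i ≤ X i) → sg (fun i => X i - C i) ≠ n}) :
    ∀ X : Fin m → ℕ, sg X = msigma β X := by
  have main : ∀ N (X : Fin m → ℕ), (∑ i, X i) = N → sg X = msigma β X := by
    intro N
    induction N using Nat.strong_induction_on with
    | _ N IH =>
      intro X hXN
      have hsub : ∀ C : Fin m → ℕ, C ≠ 0 → (∀ i, C i ≤ X i) →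
          sg (fun i => X i - C i) = msigma β (fun i => X i - C i) := by
        intro C hC0 hle
        have hj : ∃ j, C j ≠ 0 := by
          by_contra hc
          push_neg at hc
          exact hC0 (funext hc)
        obtain ⟨j, hj⟩ := hj
        have h1 : C j ≤ ∑ i, C i :=
          Finset.single_le_sum (fun i _ => Nat.zero_le _) (Finset.mem_univ j)
        have h2 : ∑ i, C i ≤ ∑ i, X i := Finset.sum_le_sum (fun i _ => hle i)
        have hlt : (∑ i, (X i - C i)) < N := by
          rw [Finset.sum_tsub_distrib _ (fun i (_ : i ∈ Finset.univ) => hle i)]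
          omega
        exact IH _ hlt _ rfl
      rw [hsg X]
      set S : Set ℕ := {n : ℕ | ∀ C : Fin m → ℕ, C ≠ 0 →
        mord β (∑ i, C i) = (⨅ i, mord β (C i)) →
        (∀ i, C i ≤ X i) → sg (fun i => X i - C i) ≠ n} with hS
      have hmem : msigma β X ∈ S := by
        intro C hC0 hord hle
        rw [hsub C hC0 hle]
        exact lemA hβ X C hC0 hord hle
      have hle1 : sInf S ≤ msigma β X := Nat.sInf_le hmem
      have hmemInf : sInf S ∈ S := Nat.sInf_mem ⟨_, hmem⟩
      refine le_antisymm hle1 ?_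
      by_contra hc
      push_neg at hc
      obtain ⟨C, hC0, hord, hCle, hsig⟩ := lemB hβ X (sInf S) hc
      exact (hmemInf C hC0 hord hCle) (by rw [hsub C hC0 hCle, hsig])
  intro X
  exact main (∑ i, X i) X rfl
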